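/- arXiv:1708.00910 — 2 statements merged into one kernel-verified Lean document; each statement's English description precedes it below -/
import Mathlib

section
/- If 1 ≤ p < q < ∞, then the space of pointwise multipliers from L^p(𝕋) to L^q(𝕋) is trivial: the only measurable function a such that a·f ∈ L^q(𝕋) for every f ∈ L^p(𝕋) is a = 0 a.e. -/
open MeasureTheory Filter Topology ComplexConjugate
open scoped ENNReal

noncomputable section

instance fact_two_pi_pos : Fact (0 < 2 * Real.pi) := ⟨by positivity⟩

/-- The unit circle, modelled additively as `ℝ / 2πℤ`. -/
abbrev 𝕋 := AddCircle (2 * Real.pi)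

/-- Normalized Lebesgue (Haar) measure on the circle. -/
def μ : Measure 𝕋 := AddCircle.haarAddCircle

/-- A (quasi-)norm functional on measurable functions on the circle, with values in `ℝ≥0∞`. -/
abbrev NormFn := (𝕋 → ℂ) → ℝ≥0∞

/-- Membership in the function space determined by the norm functional `N`. -/
def MemN (N : NormFn) (f : 𝕋 → ℂ) : Prop :=
  AEStronglyMeasurable f μ ∧ N f < ⊤

/-- The closed unit ball of the space determined by `N`. -/
def unitBall (N : NormFn) : Set (𝕋 → ℂ) :=
  {f | AEStronglyMeasurable f μ ∧ N f ≤ 1}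

/-- The Köthe dual (associate space) norm of `N`. -/
def kdualN (N : NormFn) : NormFn := fun g =>
  ⨆ f : unitBall N, ∫⁻ t, (‖f.1 t * g t‖₊ : ℝ≥0∞) ∂μ

/-- The norm of the space `M(X,Y)` of pointwise multipliers, i.e. the operator norm of
multiplication by `a` from the space of `NX` to the space of `NY`. -/
def multN (NX NY : NormFn) : NormFn := fun a =>
  ⨆ f : unitBall NX, NY (fun t => a t * f.1 t)

/-- The norm of the pointwise product space `X ⊙ Y`. -/
def prodN (NX NY : NormFn) : NormFn := fun h =>
  ⨅ p : {p : (𝕋 → ℂ) × (𝕋 → ℂ) //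
      AEStronglyMeasurable p.1 μ ∧ AEStronglyMeasurable p.2 μ ∧
      h =ᵐ[μ] fun t => p.1 t * p.2 t},
    NX p.1.1 * NY p.1.2

/-- Membership in the Hardy space `H[X]`: membership in `X` together with the vanishing of all
negative Fourier coefficients. -/
def HardyMemN (N : NormFn) (f : 𝕋 → ℂ) : Prop :=
  AEStronglyMeasurable f μ ∧ N f < ⊤ ∧ ∀ n : ℤ, n < 0 → fourierCoeff f n = 0

/-- Operator norm of `T` from the space of `N1` to that of `N2`. -/
def opN (N1 N2 : NormFn) (T : (𝕋 → ℂ) → (𝕋 → ℂ)) : ℝ≥0∞ :=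
  ⨆ f : unitBall N1, N2 (T f.1)

/-- Operator norm of `T` restricted to the Hardy space of `N1`, measured in `N2`. -/
def hardyOpN (N1 N2 : NormFn) (T : (𝕋 → ℂ) → (𝕋 → ℂ)) : ℝ≥0∞ :=
  ⨆ f : {f : 𝕋 → ℂ // HardyMemN N1 f ∧ N1 f ≤ 1}, N2 (T f.1)

/-- `P` is (a realization of) the Riesz projection: it respects a.e. equality and, on integrable
functions, keeps the Fourier coefficients with nonnegative index and kills the others. -/
def IsRieszProj (P : (𝕋 → ℂ) → (𝕋 → ℂ)) : Prop :=
  (∀ f g, f =ᵐ[μ] g → P f =ᵐ[μ] P g) ∧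
  (∀ f g, P (f + g) =ᵐ[μ] P f + P g) ∧
  (∀ (c : ℂ) f, P (fun t => c * f t) =ᵐ[μ] fun t => c * P f t) ∧
  (∀ f, Integrable f μ → Integrable (P f) μ ∧
    ∀ n : ℤ, fourierCoeff (P f) n = if 0 ≤ n then fourierCoeff f n else 0)

/-- The flip operator `(Jf)(t) = t⁻¹ f(t⁻¹)`, written additively on `ℝ/2πℤ`. -/
def Jflip (f : 𝕋 → ℂ) : 𝕋 → ℂ := fun x => fourier (-1) x * f (-x)

/-- The dilation operator `D_s`: `(D_s f)(e^{iθ}) = f(e^{iθs})` for `θs ∈ [0,2π)`, `0` otherwise. -/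
def dilOp (s : ℝ) (f : 𝕋 → ℂ) : 𝕋 → ℂ := fun x =>
  let θ : ℝ := (AddCircle.equivIco (2 * Real.pi) 0 x : ℝ)
  if 0 ≤ s * θ ∧ s * θ < 2 * Real.pi then f ((s * θ : ℝ) : 𝕋) else 0

/-- Operator norm of the dilation `D_s` on the space of `N`. -/
def dilNorm (N : NormFn) (s : ℝ) : ℝ≥0∞ :=
  ⨆ f : unitBall N, N (dilOp s f.1)

/-- `α` is the lower Boyd index of the space of `N`. -/
def boydLower (N : NormFn) (α : ℝ) : Prop :=
  Tendsto (fun s : ℝ => Real.log (dilNorm N (1 / s)).toReal / Real.log s) (𝓝[>] 0) (𝓝 α)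

/-- `β` is the upper Boyd index of the space of `N`. -/
def boydUpper (N : NormFn) (β : ℝ) : Prop :=
  Tendsto (fun s : ℝ => Real.log (dilNorm N (1 / s)).toReal / Real.log s) atTop (𝓝 β)

/-- The space of `N` has nontrivial Boyd indices. -/
def NontrivialBoyd (N : NormFn) : Prop :=
  ∃ α β : ℝ, 0 < α ∧ β < 1 ∧ boydLower N α ∧ boydUpper N β

/-- Trigonometric polynomials. -/
def IsTrigPoly (f : 𝕋 → ℂ) : Prop :=
  ∃ (n : ℕ) (c : ℤ → ℂ), f = fun x => ∑ k ∈ Finset.Icc (-(n : ℤ)) n, c k * fourier k x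

/-- Analytic trigonometric polynomials. -/
def IsAnalyticPoly (f : 𝕋 → ℂ) : Prop :=
  ∃ (n : ℕ) (c : ℕ → ℂ), f = fun x => ∑ k ∈ Finset.range (n + 1), c k * fourier (k : ℤ) x

/-- The Fejér kernel `K_n`. -/
def fejer (n : ℕ) : 𝕋 → ℂ := fun x =>
  ∑ k ∈ Finset.Icc (-(n : ℤ)) n, (1 - (|(k : ℝ)| / (n + 1)) : ℂ) * fourier k x

/-- Convolution with the Fejér kernel, `f * K_n`. -/
def convFejer (n : ℕ) (f : 𝕋 → ℂ) : 𝕋 → ℂ := fun x =>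
  ∫ y, f y * fejer n (x - y) ∂μ

/-- The Banach envelope norm of `N`. -/
def envN (N : NormFn) : NormFn := fun f =>
  ⨅ d : {d : Σ n : ℕ, Fin n → 𝕋 → ℂ // f =ᵐ[μ] fun t => ∑ i, d.2 i t},
    ∑ i, N (d.1.2 i)

/-- The Banach envelope norm of the Hardy space `H[Z]` (decompositions within `H[Z]`). -/
def envHardyN (N : NormFn) : NormFn := fun f =>
  ⨅ d : {d : Σ n : ℕ, Fin n → 𝕋 → ℂ //
      (∀ i, HardyMemN N (d.2 i)) ∧ f =ᵐ[μ] fun t => ∑ i, d.2 i t},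
    ∑ i, N (d.1.2 i)

/-- The norm of the 1/2-concavification `Z^{(1/2)}`: `‖f‖ = ‖|f|^{1/2}‖²`. -/
def concavHalf (N : NormFn) : NormFn := fun f =>
  (N (fun t => (Real.sqrt ‖f t‖ : ℂ))) ^ 2

/-- `dist_{M(X,Y)}(a, conj H[M(X,Y)])`: the infimum of multiplier norms of symbols `b` whose
Fourier coefficients agree with those of `a` for positive indices. -/
def hankelDist (NX NY : NormFn) (a : 𝕋 → ℂ) : ℝ≥0∞ :=
  ⨅ b : {b : 𝕋 → ℂ // AEStronglyMeasurable b μ ∧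
      ∀ k : ℤ, 0 < k → fourierCoeff b k = fourierCoeff a k},
    multN NX NY b.1

/-- The Kuratowski measure of noncompactness of the set `A`, with diameters measured by `N`. -/
def setMNC (N : NormFn) (A : Set (𝕋 → ℂ)) : ℝ≥0∞ :=
  ⨅ d : {d : ℝ≥0∞ // ∃ (n : ℕ) (B : Fin n → Set (𝕋 → ℂ)),
      (∀ f ∈ A, ∃ i, f ∈ B i) ∧
      ∀ i, ∀ f ∈ B i, ∀ g ∈ B i, N (fun t => f t - g t) ≤ d}, d.1

/-- The decreasing rearrangement `f*` of `f`. -/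
def decRearr (f : 𝕋 → ℂ) (s : ℝ) : ℝ≥0∞ :=
  sInf {l : ℝ≥0∞ | μ {t | l < (‖f t‖₊ : ℝ≥0∞)} ≤ ENNReal.ofReal s}

/-- The Lorentz norm `‖f‖_{L^{p,q}}` on the circle (total measure 1). -/
def lorentzN (p q : ℝ≥0∞) : NormFn := fun f =>
  if q = ⊤ then ⨆ s : Set.Ioo (0 : ℝ) 1, decRearr f s.1 * ENNReal.ofReal (s.1 ^ (1 / p).toReal)
  else (∫⁻ s in Set.Ioo (0 : ℝ) 1,
      (decRearr f s * ENNReal.ofReal (s ^ (1 / p).toReal)) ^ q.toReal / ENNReal.ofReal s)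
    ^ (1 / q).toReal

/-- `dist_{L^{p,q}}(a, conj H^{p,q})` expressed via matching of positive Fourier coefficients. -/
def lorDist (p q : ℝ≥0∞) (a : 𝕋 → ℂ) : ℝ≥0∞ :=
  ⨅ b : {b : 𝕋 → ℂ // AEStronglyMeasurable b μ ∧
      ∀ k : ℤ, 0 < k → fourierCoeff b k = fourierCoeff a k},
    lorentzN p q b.1

/-- The analytic polynomial with coefficients `c 0, …, c n`. -/
def aPoly (n : ℕ) (c : ℕ → ℂ) : 𝕋 → ℂ := fun x =>
  ∑ k ∈ Finset.range (n + 1), c k * fourier (k : ℤ) x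

/-- The polynomial `p^c(t) = conj (p(1/t))`, i.e. with conjugated coefficients. -/
def aPolyC (n : ℕ) (c : ℕ → ℂ) : 𝕋 → ℂ := aPoly n fun k => (starRingEnd ℂ) (c k)

/-- A Banach function space over the circle, encoded by its norm functional. -/
structure BFS where
  N : NormFn
  ae_congr : ∀ f g, f =ᵐ[μ] g → N f = N g
  add_le : ∀ f g, N (f + g) ≤ N f + N g
  smul_eq : ∀ (c : ℂ) (f), N (fun t => c * f t) = (‖c‖₊ : ℝ≥0∞) * N f
  ideal : ∀ f g, AEStronglyMeasurable g μ → (∀ᵐ t ∂μ, ‖g t‖ ≤ ‖f t‖) → N g ≤ N f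
  const_finite : N (fun _ => 1) < ⊤
  norm_eq_zero : ∀ f, AEStronglyMeasurable f μ → N f = 0 → f =ᵐ[μ] fun _ => 0
  semiFatou : ∀ (f : ℕ → 𝕋 → ℂ) (g : 𝕋 → ℂ),
    (∀ n, AEStronglyMeasurable (f n) μ) → AEStronglyMeasurable g μ →
    (∀ᵐ t ∂μ, Monotone (fun n => ‖f n t‖) ∧
      Tendsto (fun n => ‖f n t‖) atTop (𝓝 ‖g t‖)) →
    N g < ⊤ → N g = ⨆ n, N (f n)
  complete : ∀ f : ℕ → 𝕋 → ℂ, (∀ n, AEStronglyMeasurable (f n) μ) →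
    (∑' n, N (f n)) < ⊤ →
    ∃ g, AEStronglyMeasurable g μ ∧ N g < ⊤ ∧
      Tendsto (fun n => N (fun t => g t - ∑ k ∈ Finset.range n, f k t)) atTop (𝓝 0)

/-- A quasi-Banach function space over the circle, with quasi-triangle constant `kappa`. -/
structure QBFS where
  N : NormFn
  kappa : ℝ≥0∞
  one_le_kappa : 1 ≤ kappa
  kappa_finite : kappa < ⊤
  ae_congr : ∀ f g, f =ᵐ[μ] g → N f = N g
  add_le : ∀ f g, N (f + g) ≤ kappa * (N f + N g)
  smul_eq : ∀ (c : ℂ) (f), N (fun t => c * f t) = (‖c‖₊ : ℝ≥0∞) * N f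
  ideal : ∀ f g, AEStronglyMeasurable g μ → (∀ᵐ t ∂μ, ‖g t‖ ≤ ‖f t‖) → N g ≤ N f
  const_finite : N (fun _ => 1) < ⊤
  norm_eq_zero : ∀ f, AEStronglyMeasurable f μ → N f = 0 → f =ᵐ[μ] fun _ => 0
  semiFatou : ∀ (f : ℕ → 𝕋 → ℂ) (g : 𝕋 → ℂ),
    (∀ n, AEStronglyMeasurable (f n) μ) → AEStronglyMeasurable g μ →
    (∀ᵐ t ∂μ, Monotone (fun n => ‖f n t‖) ∧
      Tendsto (fun n => ‖f n t‖) atTop (𝓝 ‖g t‖)) →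
    N g < ⊤ → N g = ⨆ n, N (f n)

/-- Rearrangement invariance of the norm functional `N`. -/
def RearrInvN (N : NormFn) : Prop :=
  ∀ f g, AEStronglyMeasurable f μ → AEStronglyMeasurable g μ →
    (∀ lam : ℝ, 0 < lam → μ {t | lam < ‖f t‖} = μ {t | lam < ‖g t‖}) →
    N f = N g

/-- `f` is an order continuous element of the space of `N`. -/
def OrderContElemN (N : NormFn) (f : 𝕋 → ℂ) : Prop :=
  MemN N f ∧ ∀ g : ℕ → 𝕋 → ℂ, (∀ n, AEStronglyMeasurable (g n) μ) →
    (∀ n, ∀ᵐ t ∂μ, ‖g n t‖ ≤ ‖f t‖) →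
    (∀ᵐ t ∂μ, Tendsto (fun n => ‖g n t‖) atTop (𝓝 0)) →
    Tendsto (fun n => N (g n)) atTop (𝓝 0)

/-- The space of `N` is order continuous (equivalently, separable). -/
def OrderContN (N : NormFn) : Prop :=
  ∀ f, MemN N f → OrderContElemN N f

/-- The Fatou property of the norm functional `N`. -/
def FatouN (N : NormFn) : Prop :=
  ∀ (f : ℕ → 𝕋 → ℂ) (g : 𝕋 → ℂ),
    (∀ n, AEStronglyMeasurable (f n) μ) → AEStronglyMeasurable g μ →
    (∀ᵐ t ∂μ, Monotone (fun n => ‖f n t‖) ∧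
      Tendsto (fun n => ‖f n t‖) atTop (𝓝 ‖g t‖)) →
    N g = ⨆ n, N (f n)


instance : IsProbabilityMeasure (μ) := inferInstanceAs (IsProbabilityMeasure AddCircle.haarAddCircle)

noncomputable def circG : 𝕋 → ℝ := fun z => ((AddCircle.equivIoc (2*Real.pi) 0 z : ℝ))

lemma circG_measurable : Measurable circG :=
  measurable_subtype_coe.comp (AddCircle.measurableEquivIoc (2*Real.pi) 0).measurable

lemma circG_mem (z : 𝕋) : circG z ∈ Set.Ioc 0 (0 + 2*Real.pi) := (AddCircle.equivIoc (2*Real.pi) 0 z).2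

lemma circG_coe {x : ℝ} (hx : x ∈ Set.Ioc 0 (0 + 2*Real.pi)) : circG ((x : ℝ) : 𝕋) = x := by
  have : (AddCircle.equivIoc (2*Real.pi) 0) ((x : ℝ) : 𝕋) = ⟨x, hx⟩ := by
    rw [Equiv.apply_eq_iff_eq_symm_apply]; rfl
  simp [circG, this]

lemma vol_circG_preimage {S : Set ℝ} (hS : MeasurableSet S) :
    (volume : Measure 𝕋) (circG ⁻¹' S) = volume (S ∩ Set.Ioc 0 (0 + 2*Real.pi)) := by
  rw [AddCircle.add_projection_respects_measure (2*Real.pi) 0 (circG_measurable hS)]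
  congr 1
  ext y
  simp only [Set.mem_inter_iff, Set.mem_preimage]
  constructor
  · rintro ⟨hy1, hy2⟩; exact ⟨by rwa [circG_coe hy2] at hy1, hy2⟩
  · rintro ⟨hy1, hy2⟩; exact ⟨by rwa [circG_coe hy2], hy2⟩

lemma mu_le_vol (X : Set 𝕋) : μ X ≤ (volume : Measure 𝕋) X := by
  calc μ X = 1 * μ X := (one_mul _).symm
    _ ≤ ENNReal.ofReal (2*Real.pi) * μ X := by
        gcongr
        rw [ENNReal.one_le_ofReal]
        nlinarith [Real.pi_gt_three]
    _ = (volume : Measure 𝕋) X := by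
        rw [AddCircle.volume_eq_smul_haarAddCircle]; rfl

/-- Arcs of the circle. -/
def Arc (x : ℝ) : Set 𝕋 := circG ⁻¹' Set.Iic x

lemma Arc_measurable (x : ℝ) : MeasurableSet (Arc x) := circG_measurable measurableSet_Iic

lemma Arc_mono {x y : ℝ} (h : x ≤ y) : Arc x ⊆ Arc y := fun z hz => le_trans hz h

/-- Sierpinski-type lemma on the circle: any value up to `μ s` is attained on `s ∩ Arc x`. -/
lemma exists_arc_inter {s : Set 𝕋} (hs : MeasurableSet s) {c : ℝ≥0∞} (hc : c ≤ μ s) :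
    ∃ x : ℝ, μ (s ∩ Arc x) = c := by
  have hfin : ∀ x, μ (s ∩ Arc x) ≠ ⊤ := fun x => measure_ne_top μ _
  set G : ℝ → ℝ := fun x => (μ (s ∩ Arc x)).toReal with hG
  have hmono : Monotone G := fun x y h =>
    ENNReal.toReal_mono (hfin y) (measure_mono (Set.inter_subset_inter_right _ (Arc_mono h)))
  have hstep : ∀ {x y : ℝ}, x ≤ y → G y ≤ G x + (y - x) := by
    intro x y hxy
    have hsub : s ∩ Arc y ⊆ (s ∩ Arc x) ∪ circG ⁻¹' Set.Ioc x y := by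
      rintro z ⟨hz1, hz2⟩
      rcases le_or_gt (circG z) x with h | h
      · exact Or.inl ⟨hz1, h⟩
      · exact Or.inr ⟨h, hz2⟩
    have hB : μ (circG ⁻¹' Set.Ioc x y) ≤ ENNReal.ofReal (y - x) := by
      refine (mu_le_vol _).trans ?_
      rw [vol_circG_preimage measurableSet_Ioc]
      refine (measure_mono Set.inter_subset_left).trans ?_
      rw [Real.volume_Ioc]
    have hle : μ (s ∩ Arc y) ≤ μ (s ∩ Arc x) + ENNReal.ofReal (y - x) :=
      (measure_mono hsub).trans ((measure_union_le _ _).trans (by gcongr))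
    have := ENNReal.toReal_mono (by finiteness) hle
    rwa [ENNReal.toReal_add (hfin x) ENNReal.ofReal_ne_top,
      ENNReal.toReal_ofReal (sub_nonneg.2 hxy)] at this
  have hcont : Continuous G := by
    refine (LipschitzWith.of_dist_le_mul (K := 1) fun x y => ?_).continuous
    rcases le_total x y with h | h
    · rw [Real.dist_eq, Real.dist_eq, NNReal.coe_one, one_mul, abs_of_nonpos (sub_nonpos.2 (hmono h)),
        abs_of_nonpos (sub_nonpos.2 h)]
      have := hstep h; linarith
    · rw [Real.dist_eq, Real.dist_eq, NNReal.coe_one, one_mul, abs_of_nonneg (sub_nonneg.2 (hmono h)),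
        abs_of_nonneg (sub_nonneg.2 h)]
      have := hstep h; linarith
  have hG0 : G 0 = 0 := by
    have : Arc 0 = ∅ := by
      apply Set.eq_empty_iff_forall_notMem.2
      intro z hz
      exact absurd (circG_mem z).1 (not_lt.2 hz)
    simp [hG, this]
  have hGT : G (0 + 2*Real.pi) = (μ s).toReal := by
    have : Arc (2*Real.pi) = Set.univ :=
      Set.eq_univ_iff_forall.2 fun z => (by simpa using (circG_mem z).2 : circG z ≤ 2*Real.pi)
    simp [hG, this]
  have hctop : c ≠ ⊤ := ne_top_of_le_ne_top (measure_ne_top μ s) hc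
  have hmem : c.toReal ∈ Set.Icc (G 0) (G (0 + 2*Real.pi)) := by
    constructor
    · rw [hG0]; exact ENNReal.toReal_nonneg
    · rw [hGT]; exact ENNReal.toReal_mono (measure_ne_top μ s) hc
  obtain ⟨x, -, hx⟩ := intermediate_value_Icc (by positivity) hcont.continuousOn hmem
  exact ⟨x, (ENNReal.toReal_eq_toReal_iff' (hfin x) hctop).mp hx⟩


/-- If `1 ≤ p < q < ∞`, the only pointwise multiplier from `L^p(𝕋)` to
`L^q(𝕋)` is the zero function. -/
theorem multiplier_Lp_Lq_trivial (p q : ℝ≥0∞) (hp : 1 ≤ p) (hpq : p < q) (hq : q < ⊤)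
    (a : 𝕋 → ℂ) (ha : AEStronglyMeasurable a μ)
    (h : ∀ f : 𝕋 → ℂ, MemLp f p μ → MemLp (fun t => a t * f t) q μ) :
    a =ᵐ[μ] fun _ => 0 := by
  by_contra hcon
  set b := ha.mk a with hbdef
  have hb : StronglyMeasurable b := ha.stronglyMeasurable_mk
  have hab : a =ᵐ[μ] b := ha.ae_eq_mk
  have hbne : ¬ (b =ᵐ[μ] fun _ => 0) := fun hz => hcon (hab.trans hz)
  have hμpos : μ {t | b t ≠ 0} ≠ 0 := by
    intro h0
    exact hbne (by rw [Filter.EventuallyEq, ae_iff]; simpa using h0)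
  obtain ⟨n₀, hn₀⟩ : ∃ n : ℕ, μ {t | 1/((n:ℝ)+1) < ‖b t‖} ≠ 0 := by
    by_contra hall
    push_neg at hall
    apply hμpos
    refine measure_mono_null ?_ (measure_iUnion_null fun n : ℕ => hall n)
    intro t ht
    have hpos : 0 < ‖b t‖ := norm_pos_iff.2 ht
    obtain ⟨n, hn⟩ := exists_nat_one_div_lt hpos
    exact Set.mem_iUnion.2 ⟨n, hn⟩
  set ε : ℝ := 1/((n₀:ℝ)+1) with hεdef
  have hε : 0 < ε := by positivity
  set E : Set 𝕋 := {t | ε < ‖b t‖} with hEdef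
  have hEm : MeasurableSet E := measurableSet_lt measurable_const hb.measurable.norm
  set δ := μ E with hδdef
  have hδ0 : δ ≠ 0 := hn₀
  have hδtop : δ ≠ ⊤ := measure_ne_top μ E
  -- geometric weights
  set v : ℕ → ℝ≥0∞ := fun n => δ * (2:ℝ≥0∞)⁻¹ ^ n with hvdef
  have h2top : ((2:ℝ≥0∞)⁻¹) ≠ ⊤ := by simp
  have hv0 : ∀ n, v n ≠ 0 := fun n => mul_ne_zero hδ0 (pow_ne_zero _ (by simp))
  have hvtop : ∀ n, v n ≠ ⊤ := fun n => ENNReal.mul_ne_top hδtop (ENNReal.pow_ne_top h2top)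
  have hvsum : ∀ n, v (n+1) + v (n+1) = v n := by
    intro n
    have h1 : v (n+1) + v (n+1) = (δ * (2:ℝ≥0∞)⁻¹ ^ n) * ((2:ℝ≥0∞)⁻¹ + (2:ℝ≥0∞)⁻¹) := by
      rw [hvdef]; simp only [pow_succ]; ring
    rw [h1, ENNReal.inv_two_add_inv_two, mul_one]
  have hvle : ∀ n, v n ≤ δ := by
    intro n
    calc v n ≤ δ * 1 := by
          show δ * (2:ℝ≥0∞)⁻¹ ^ n ≤ δ * 1
          gcongr
          exact pow_le_one' (ENNReal.inv_le_one.2 one_le_two) n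
      _ = δ := mul_one δ
  have hvd : ∀ n, v (n+1) + v (n+1) ≤ δ := fun n => (hvsum n).le.trans (hvle n)
  have hvlt : ∀ n, v (n+1) < v n := fun n =>
    (ENNReal.lt_add_right (hvtop (n+1)) (hv0 (n+1))).trans_eq (hvsum n)
  -- arc selection
  have hsel : ∀ n : ℕ, ∃ x : ℝ, μ (E ∩ Arc x) = δ - v n :=
    fun n => exists_arc_inter hEm (tsub_le_self.trans hδdef.ge)
  choose x hx using hsel
  set B : ℕ → Set 𝕋 := fun n => E ∩ Arc (x n) with hBdef
  have hBm : ∀ n, MeasurableSet (B n) := fun n => hEm.inter (Arc_measurable _)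
  have hBE : ∀ n, B n ⊆ E := fun n => Set.inter_subset_left
  have hμB : ∀ n, μ (B n) = δ - v n := fun n => hx n
  have hxmono : Monotone x := by
    apply monotone_nat_of_le_succ
    intro n
    by_contra hlt
    push_neg at hlt
    have hle : μ (B (n+1)) ≤ μ (B n) :=
      measure_mono (Set.inter_subset_inter_right _ (Arc_mono hlt.le))
    rw [hμB, hμB] at hle
    have hred := ENNReal.toReal_mono (by finiteness) hle
    rw [ENNReal.toReal_sub_of_le (hvle (n+1)) hδtop,
      ENNReal.toReal_sub_of_le (hvle n) hδtop] at hred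
    have hstrict : (v (n+1)).toReal < (v n).toReal :=
      ENNReal.toReal_strict_mono (hvtop n) (hvlt n)
    linarith
  have hBsub : ∀ {m n : ℕ}, m ≤ n → B m ⊆ B n :=
    fun {m n} hmn => Set.inter_subset_inter_right _ (Arc_mono (hxmono hmn))
  -- the disjoint pieces
  set A : ℕ → Set 𝕋 := fun n => B (n+1) \ B n with hAdef
  have hAm : ∀ n, MeasurableSet (A n) := fun n => (hBm (n+1)).diff (hBm n)
  have hAE : ∀ n, A n ⊆ E := fun n => (Set.diff_subset).trans (hBE (n+1))
  have hμA : ∀ n, μ (A n) = v (n+1) := by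
    intro n
    have hd : μ (A n) = μ (B (n+1)) - μ (B n) :=
      measure_diff (hBsub (Nat.le_succ n)) (hBm n).nullMeasurableSet (measure_ne_top μ _)
    rw [hd, hμB, hμB]
    have h1 : δ - v n = (δ - v (n+1)) - v (n+1) := by
      rw [← tsub_add_eq_tsub_tsub, hvsum n]
    rw [h1]
    refine ENNReal.sub_sub_cancel ?_ ?_
    · exact (tsub_le_self.trans_lt hδtop.lt_top).ne
    · exact ENNReal.le_sub_of_add_le_left (hvtop (n+1)) (hvd n)
  have hAuniq : ∀ {m n : ℕ}, m ≠ n → ∀ {t}, t ∈ A m → t ∉ A n := by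
    intro m n hmn t htm htn
    rcases lt_or_gt_of_ne hmn with hlt | hlt
    · exact htn.2 (hBsub (Nat.succ_le_of_lt hlt) htm.1)
    · exact htm.2 (hBsub (Nat.succ_le_of_lt hlt) htn.1)
  -- exponents
  have hp0 : p ≠ 0 := (zero_lt_one.trans_le hp).ne'
  have hptop : p ≠ ⊤ := (hpq.trans hq).ne
  have hq0 : q ≠ 0 := (zero_lt_one.trans_le (hp.trans hpq.le)).ne'
  have hqtop : q ≠ ⊤ := hq.ne
  set pr := p.toReal with hprdef
  set qr := q.toReal with hqrdef
  have hpr : 0 < pr := ENNReal.toReal_pos hp0 hptop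
  have hqr : 0 < qr := ENNReal.toReal_pos hq0 hqtop
  have hprqr : pr < qr := ENNReal.toReal_strict_mono hqtop hpq
  -- the weights
  set w : ℕ → ℝ≥0∞ := fun n => (μ (A n)) ^ (-(1/qr)) with hwdef
  have hμA0 : ∀ n, μ (A n) ≠ 0 := fun n => by rw [hμA n]; exact hv0 _
  have hμAtop : ∀ n, μ (A n) ≠ ⊤ := fun n => measure_ne_top μ _
  have hwtop : ∀ n, w n ≠ ⊤ := by
    intro n
    rw [hwdef]
    simp only
    rw [ENNReal.rpow_neg]
    exact ENNReal.inv_ne_top.2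
      (ENNReal.rpow_pos (pos_iff_ne_zero.mpr (hμA0 n)) (hμAtop n)).ne'
  -- the function
  set Φ : 𝕋 → ℝ≥0∞ := fun t => ∑' n, (A n).indicator (fun _ => w n) t with hΦdef
  have hΦapp : ∀ t, Φ t = ∑' n, (A n).indicator (fun _ => w n) t := fun _ => rfl
  have hind0 : ∀ (v' : ℕ → ℝ≥0∞) {t}, (∀ n, t ∉ A n) →
      ∑' n, (A n).indicator (fun _ => v' n) t = 0 := by
    intro v' t ht
    rw [tsum_congr fun n => Set.indicator_of_notMem (ht n) _, tsum_zero]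
  have hind1 : ∀ (v' : ℕ → ℝ≥0∞) {t} (m : ℕ), t ∈ A m →
      ∑' n, (A n).indicator (fun _ => v' n) t = v' m := by
    intro v' t m hm
    rw [tsum_eq_single m fun n hn => Set.indicator_of_notMem (hAuniq (Ne.symm hn) hm) _]
    exact Set.indicator_of_mem hm _
  have hΦmem : ∀ {t m}, t ∈ A m → Φ t = w m := fun {t m} hm => hind1 w m hm
  have hΦtop : ∀ t, Φ t ≠ ⊤ := by
    intro t
    by_cases hex : ∃ m, t ∈ A m
    · obtain ⟨m, hm⟩ := hex; rw [hΦmem hm]; exact hwtop m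
    · push_neg at hex
      rw [hΦapp t, hind0 w hex]
      exact ENNReal.zero_ne_top
  have hΦmeas : Measurable Φ :=
    Measurable.ennreal_tsum fun n => measurable_const.indicator (hAm n)
  set f : 𝕋 → ℂ := fun t => ((Φ t).toReal : ℂ) with hfdef
  have hfmeas : Measurable f := Complex.measurable_ofReal.comp hΦmeas.ennreal_toReal
  have hfe : ∀ t, (‖f t‖₊ : ℝ≥0∞) = Φ t := by
    intro t
    rw [← enorm_eq_nnnorm, ← ofReal_norm]
    have h1 : ‖f t‖ = (Φ t).toReal := by
      rw [hfdef]
      simp only [Complex.norm_real, Real.norm_eq_abs]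
      exact abs_of_nonneg ENNReal.toReal_nonneg
    rw [h1, ENNReal.ofReal_toReal (hΦtop t)]
  have hΦr : ∀ (r : ℝ), 0 < r → ∀ t,
      Φ t ^ r = ∑' n, (A n).indicator (fun _ => w n ^ r) t := by
    intro r hr t
    by_cases hex : ∃ m, t ∈ A m
    · obtain ⟨m, hm⟩ := hex
      rw [hΦmem hm, hind1 (fun n => w n ^ r) m hm]
    · push_neg at hex
      rw [hΦapp t, hind0 w hex, hind0 (fun n => w n ^ r) hex, ENNReal.zero_rpow_of_pos hr]
  have hlint : ∀ v' : ℕ → ℝ≥0∞,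
      ∫⁻ t, (∑' n, (A n).indicator (fun _ => v' n) t) ∂μ = ∑' n, v' n * μ (A n) := by
    intro v'
    rw [lintegral_tsum fun n => (measurable_const.indicator (hAm n)).aemeasurable]
    refine tsum_congr fun n => ?_
    rw [lintegral_indicator (hAm n), setLIntegral_const]
  -- sum computations
  have hwq : ∀ n, w n ^ qr * μ (A n) = 1 := by
    intro n
    have h1 : w n ^ qr = μ (A n) ^ (-(1:ℝ)) := by
      simp only [hwdef]
      rw [← ENNReal.rpow_mul]
      congr 1
      field_simp
    rw [h1, ENNReal.rpow_neg_one, ENNReal.inv_mul_cancel (hμA0 n) (hμAtop n)]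
  set θ : ℝ := 1 - pr/qr with hθdef
  have hθ0 : 0 < θ := by
    rw [hθdef]
    have : pr/qr < 1 := (div_lt_one hqr).2 hprqr
    linarith
  set sq : ℝ≥0∞ := (2:ℝ≥0∞)⁻¹ ^ θ with hsqdef
  have hsq1 : sq < 1 := ENNReal.rpow_lt_one (by norm_num) hθ0
  have hwp : ∀ n, w n ^ pr * μ (A n) = μ (A n) ^ θ := by
    intro n
    have h1 : w n ^ pr = μ (A n) ^ (-(pr/qr)) := by
      simp only [hwdef]
      rw [← ENNReal.rpow_mul]
      congr 1
      ring
    rw [h1]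
    nth_rewrite 2 [← ENNReal.rpow_one (μ (A n))]
    rw [← ENNReal.rpow_add _ _ (hμA0 n) (hμAtop n)]
    congr 1
    rw [hθdef]; ring
  have hAθ : ∀ n, μ (A n) ^ θ = δ ^ θ * sq ^ (n+1) := by
    intro n
    simp only [hμA n, hvdef]
    rw [ENNReal.mul_rpow_of_ne_top hδtop (ENNReal.pow_ne_top h2top),
      ← ENNReal.rpow_natCast ((2:ℝ≥0∞)⁻¹) (n+1), ← ENNReal.rpow_mul,
      mul_comm ((n+1:ℕ):ℝ) θ, ENNReal.rpow_mul, ENNReal.rpow_natCast]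
  have hsum_p : ∑' n, w n ^ pr * μ (A n) ≠ ⊤ := by
    rw [tsum_congr fun n => (hwp n).trans (hAθ n)]
    have hre : ∀ n : ℕ, δ ^ θ * sq ^ (n+1) = (δ ^ θ * sq) * sq ^ n := by
      intro n; rw [pow_succ]; ring
    rw [tsum_congr hre, ENNReal.tsum_mul_left, ENNReal.tsum_geometric]
    refine ENNReal.mul_ne_top (ENNReal.mul_ne_top ?_ ?_) ?_
    · exact ENNReal.rpow_ne_top_of_nonneg hθ0.le hδtop
    · exact (hsq1.trans ENNReal.one_lt_top).ne
    · exact ENNReal.inv_ne_top.2 fun h0 => absurd (tsub_eq_zero_iff_le.1 h0) (not_le.2 hsq1)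
  have hsum_q : ∑' n, w n ^ qr * μ (A n) = ⊤ := by
    rw [tsum_congr hwq]
    exact ENNReal.tsum_const_eq_top_of_ne_zero one_ne_zero
  -- f is in L^p
  have hfL : MemLp f p μ := by
    refine ⟨hfmeas.aestronglyMeasurable, ?_⟩
    rw [eLpNorm_eq_lintegral_rpow_enorm_toReal hp0 hptop]
    simp only [enorm_eq_nnnorm]
    refine ENNReal.rpow_lt_top_of_nonneg (by positivity) ?_
    have heq : ∫⁻ t, (‖f t‖₊ : ℝ≥0∞) ^ pr ∂μ
        = ∫⁻ t, (∑' n, (A n).indicator (fun _ => w n ^ pr) t) ∂μ :=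
      lintegral_congr fun t => by rw [hfe t, hΦr pr hpr t]
    rw [heq, hlint]
    exact hsum_p
  -- a * f is not in L^q
  set εq : ℝ≥0∞ := ENNReal.ofReal ε ^ qr with hεqdef
  have hεq0 : εq ≠ 0 := (ENNReal.rpow_pos (ENNReal.ofReal_pos.2 hε) ENNReal.ofReal_ne_top).ne'
  set Ψ : 𝕋 → ℝ≥0∞ := fun t => ∑' n, (A n).indicator (fun _ => w n ^ qr) t with hΨdef
  have hΨapp : ∀ t, Ψ t = ∑' n, (A n).indicator (fun _ => w n ^ qr) t := fun _ => rfl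
  have hΨmeas : Measurable Ψ :=
    Measurable.ennreal_tsum fun n => measurable_const.indicator (hAm n)
  have haef : ∀ᵐ t ∂μ, εq * Ψ t ≤ (‖a t * f t‖₊ : ℝ≥0∞) ^ qr := by
    filter_upwards [hab] with t hteq
    by_cases hex : ∃ m, t ∈ A m
    · obtain ⟨m, hm⟩ := hex
      have hΨt : Ψ t = w m ^ qr := hind1 _ m hm
      have hEmem : ε < ‖b t‖ := hAE m hm
      have h1 : (ENNReal.ofReal ε) * w m ≤ (‖a t * f t‖₊ : ℝ≥0∞) := by
        rw [nnnorm_mul, ENNReal.coe_mul, hfe t, hΦmem hm]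
        gcongr
        rw [hteq, ← enorm_eq_nnnorm, ← ofReal_norm]
        exact ENNReal.ofReal_le_ofReal hEmem.le
      calc εq * Ψ t = (ENNReal.ofReal ε * w m) ^ qr := by
            rw [hΨt, hεqdef, ← ENNReal.mul_rpow_of_nonneg _ _ hqr.le]
        _ ≤ _ := ENNReal.rpow_le_rpow h1 hqr.le
    · push_neg at hex
      rw [hΨapp t, hind0 _ hex, mul_zero]
      exact zero_le
  have hgoal : ∫⁻ t, (‖a t * f t‖₊ : ℝ≥0∞) ^ qr ∂μ = ⊤ := by
    refine top_unique ?_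
    calc (⊤:ℝ≥0∞) = εq * ∑' n, w n ^ qr * μ (A n) := by rw [hsum_q, ENNReal.mul_top hεq0]
      _ = εq * ∫⁻ t, Ψ t ∂μ := by rw [hlint]
      _ = ∫⁻ t, εq * Ψ t ∂μ := (lintegral_const_mul εq hΨmeas).symm
      _ ≤ _ := lintegral_mono_ae haef
  have hfinal := (h f hfL).2
  simp only [eLpNorm_eq_lintegral_rpow_enorm_toReal hq0 hqtop, enorm_eq_nnnorm] at hfinal
  rw [hgoal,
    ENNReal.top_rpow_of_pos (by positivity)] at hfinal
  exact absurd hfinal (lt_irrefl ⊤)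

end
end

section
/- Let X, Y be Banach function spaces over 𝕋 with X ⊂ Y, L^∞ ⊂ X_o (the order continuous part of X), and Y having the Fatou property. Then M(X_o, Y) = M(X, Y) with equality of norms. -/
open MeasureTheory Filter Topology ComplexConjugate
open scoped ENNReal

noncomputable section

section AuxStatement8

private lemma aux_trunc_seq (X : BFS)
    (hLinf : ∀ f : 𝕋 → ℂ, MemLp f ⊤ μ → OrderContElemN X.N f)
    (f : 𝕋 → ℂ) (hf : AEStronglyMeasurable f μ) :
    ∃ (T : ℕ → 𝕋 → ℂ) (F : 𝕋 → ℝ),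
      (∀ n, OrderContElemN X.N (T n)) ∧
      (∀ n t, ‖T n t‖ ≤ F t) ∧
      (∀ n t, ‖T n t‖ ≤ (n : ℝ)) ∧
      (∀ t, 0 ≤ F t) ∧
      (F =ᵐ[μ] fun t => ‖f t‖) ∧
      (∀ᵐ t ∂μ, Monotone (fun n => ‖T n t‖) ∧
        Tendsto (fun n => ‖T n t‖) atTop (𝓝 ‖f t‖)) := by
  obtain ⟨f', hf'm, hff'⟩ := hf
  classical
  refine ⟨fun n t => if ‖f' t‖ ≤ (n : ℝ) then f' t else 0, fun t => ‖f' t‖,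
    ?_, ?_, ?_, ?_, ?_, ?_⟩
  · intro n
    apply hLinf
    have hsm : StronglyMeasurable (fun t => if ‖f' t‖ ≤ (n : ℝ) then f' t else 0) :=
      StronglyMeasurable.ite (measurableSet_le hf'm.norm.measurable measurable_const)
        hf'm stronglyMeasurable_const
    refine memLp_top_of_bound hsm.aestronglyMeasurable (n : ℝ) (Eventually.of_forall fun t => ?_)
    dsimp only
    split_ifs with h
    · exact h
    · simp
  · intro n t; dsimp only; split_ifs with h
    · exact le_rfl
    · simp
  · intro n t; dsimp only; split_ifs with h
    · exact h
    · simp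
  · intro t; exact norm_nonneg _
  · filter_upwards [hff'] with t ht; simp [ht]
  · filter_upwards [hff'] with t ht
    constructor
    · intro i j hij
      dsimp only
      by_cases h : ‖f' t‖ ≤ (i : ℝ)
      · rw [if_pos h, if_pos (h.trans (Nat.cast_le.mpr hij))]
      · rw [if_neg h]; simp
    · obtain ⟨N, hN⟩ := exists_nat_ge ‖f' t‖
      apply tendsto_atTop_of_eventually_const (i₀ := N)
      intro i hi
      rw [if_pos (hN.trans (Nat.cast_le.mpr hi)), ht]

private lemma aux_fatou_mul (Y : BFS) (hFatou : FatouN Y.N)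
    (a : 𝕋 → ℂ) (ha : AEStronglyMeasurable a μ)
    (f : 𝕋 → ℂ) (hf : AEStronglyMeasurable f μ) (T : ℕ → 𝕋 → ℂ)
    (hT : ∀ n, AEStronglyMeasurable (T n) μ)
    (hmono : ∀ᵐ t ∂μ, Monotone (fun n => ‖T n t‖) ∧
      Tendsto (fun n => ‖T n t‖) atTop (𝓝 ‖f t‖)) :
    Y.N (fun t => a t * f t) = ⨆ n, Y.N (fun t => a t * T n t) := by
  apply hFatou (fun n t => a t * T n t) (fun t => a t * f t) (fun n => ha.mul (hT n)) (ha.mul hf)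
  filter_upwards [hmono] with t ht
  obtain ⟨h1, h2⟩ := ht
  constructor
  · intro i j hij
    simp only [norm_mul]
    exact mul_le_mul_of_nonneg_left (h1 hij) (norm_nonneg _)
  · simpa only [norm_mul] using h2.const_mul ‖a t‖

private lemma aux_oc_of_approx (X : BFS) (h : 𝕋 → ℂ) (hmem : MemN X.N h)
    (key : ∀ δ : ℝ≥0∞, 0 < δ → ∃ u w : 𝕋 → ℂ, OrderContElemN X.N u ∧
      AEStronglyMeasurable w μ ∧ (∀ᵐ t ∂μ, ‖h t‖ ≤ ‖u t‖ + ‖w t‖) ∧ X.N w ≤ δ) :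
    OrderContElemN X.N h := by
  refine ⟨hmem, fun g hgm hdom hto => ?_⟩
  rw [ENNReal.tendsto_nhds_zero]
  intro ε hε
  obtain ⟨u, w, huoc, hwm, hbound, hwle⟩ := key (ε / 2) (ENNReal.half_pos hε.ne')
  set c : ℕ → 𝕋 → ℝ := fun m t => min 1 (‖u t‖ / ‖g m t‖) with hc
  have hc01 : ∀ m t, 0 ≤ c m t ∧ c m t ≤ 1 := fun m t =>
    ⟨le_min zero_le_one (div_nonneg (norm_nonneg _) (norm_nonneg _)), min_le_left _ _⟩
  set U : ℕ → 𝕋 → ℂ := fun m t => g m t * ((c m t : ℝ) : ℂ) with hU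
  have hUnorm : ∀ m t, ‖U m t‖ = min ‖g m t‖ ‖u t‖ := by
    intro m t
    by_cases hg : g m t = 0
    · simp only [hU, hg, zero_mul, norm_zero]
      exact (min_eq_left (norm_nonneg _)).symm
    · have hgn : ‖g m t‖ ≠ 0 := by simpa using hg
      have hdiv : ‖g m t‖ * (‖u t‖ / ‖g m t‖) = ‖u t‖ := by
        rw [mul_comm]; exact div_mul_cancel₀ _ hgn
      simp only [hU]
      rw [norm_mul, Complex.norm_real, Real.norm_eq_abs, abs_of_nonneg (hc01 m t).1,
        hc]
      dsimp only
      rw [mul_min_of_nonneg _ _ (norm_nonneg _), mul_one, hdiv]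
  have hcm : ∀ m, AEMeasurable (c m) μ := fun m =>
    aemeasurable_const.min (huoc.1.1.norm.aemeasurable.div (hgm m).norm.aemeasurable)
  have hUm : ∀ m, AEStronglyMeasurable (U m) μ := fun m =>
    (hgm m).mul ((Complex.measurable_ofReal.comp_aemeasurable (hcm m)).aestronglyMeasurable)
  have hUto : Tendsto (fun m => X.N (U m)) atTop (𝓝 0) := by
    apply huoc.2 U hUm
    · intro m
      filter_upwards with t
      rw [hUnorm]
      exact min_le_right _ _
    · filter_upwards [hto] with t ht
      refine squeeze_zero (fun m => norm_nonneg _) (fun m => ?_) ht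
      rw [hUnorm]
      exact min_le_left _ _
  set V : ℕ → 𝕋 → ℂ := fun m t => g m t - U m t with hV
  have hVm : ∀ m, AEStronglyMeasurable (V m) μ := fun m => (hgm m).sub (hUm m)
  have hVnorm : ∀ m t, ‖V m t‖ = ‖g m t‖ - min ‖g m t‖ ‖u t‖ := by
    intro m t
    have h1 : V m t = g m t * ((1 - c m t : ℝ) : ℂ) := by
      simp only [hV, hU]
      push_cast
      ring
    have h2 : ‖g m t‖ * c m t = min ‖g m t‖ ‖u t‖ := by
      have h3 := hUnorm m t
      simp only [hU] at h3
      rwa [norm_mul, Complex.norm_real, Real.norm_eq_abs, abs_of_nonneg (hc01 m t).1] at h3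
    rw [h1, norm_mul, Complex.norm_real, Real.norm_eq_abs,
      abs_of_nonneg (by linarith [(hc01 m t).2] : (0:ℝ) ≤ 1 - c m t), mul_sub, mul_one, h2]
  have hVle : ∀ m, ∀ᵐ t ∂μ, ‖V m t‖ ≤ ‖w t‖ := by
    intro m
    filter_upwards [hbound, hdom m] with t h1 h2
    rw [hVnorm]
    rcases le_total ‖g m t‖ ‖u t‖ with hle | hle
    · rw [min_eq_left hle]
      simp [norm_nonneg]
    · rw [min_eq_right hle]
      linarith
  have hVN : ∀ m, X.N (V m) ≤ ε / 2 :=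
    fun m => (X.ideal w (V m) (hVm m) (hVle m)).trans hwle
  have hsplit : ∀ m, X.N (g m) ≤ X.N (U m) + X.N (V m) := by
    intro m
    have heq : g m = U m + V m := by
      funext t
      show g m t = U m t + V m t
      simp only [hV]
      ring
    calc X.N (g m) = X.N (U m + V m) := by rw [← heq]
      _ ≤ _ := X.add_le _ _
  filter_upwards [(ENNReal.tendsto_nhds_zero.mp hUto) (ε/2) (ENNReal.half_pos hε.ne')] with m hm
  calc X.N (g m) ≤ X.N (U m) + X.N (V m) := hsplit m
    _ ≤ ε/2 + ε/2 := add_le_add hm (hVN m)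
    _ = ε := ENNReal.add_halves ε

private lemma aux_key_finite (X Y : BFS)
    (hLinf : ∀ f : 𝕋 → ℂ, MemLp f ⊤ μ → OrderContElemN X.N f)
    (hFatou : FatouN Y.N) (a : 𝕋 → ℂ) (ha : AEStronglyMeasurable a μ)
    (H : ∀ g, OrderContElemN X.N g → MemN Y.N (fun t => a t * g t))
    (f : 𝕋 → ℂ) (hf : MemN X.N f) : MemN Y.N (fun t => a t * f t) := by
  obtain ⟨T, F, hToc, hTF, hTn, hF0, hFf, hmono⟩ := aux_trunc_seq X hLinf f hf.1
  refine ⟨ha.mul hf.1, ?_⟩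
  rw [aux_fatou_mul Y hFatou a ha f hf.1 T (fun n => (hToc n).1.1) hmono]
  by_contra hsup
  push_neg at hsup
  have hsup' : (⨆ n, Y.N (fun t => a t * T n t)) = ⊤ := top_le_iff.mp hsup
  have hchoice : ∀ k : ℕ, ∃ m, (4 : ℝ≥0∞) ^ k < Y.N (fun t => a t * T m t) := by
    intro k
    by_contra hcon
    push_neg at hcon
    have h4 : (⨆ m, Y.N (fun t => a t * T m t)) ≤ 4 ^ k := iSup_le hcon
    rw [hsup'] at h4
    exact absurd (top_le_iff.mp h4) (ENNReal.pow_lt_top (by norm_num)).ne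
  choose n hn using hchoice
  have hgeo : Summable (fun k : ℕ => ((2:ℝ)⁻¹) ^ k) :=
    summable_geometric_of_lt_one (by norm_num) (by norm_num)
  have hsumm : ∀ t, Summable (fun k : ℕ => ((2:ℝ)⁻¹) ^ k * ‖T (n k) t‖) := fun t =>
    Summable.of_nonneg_of_le (fun k => by positivity)
      (fun k => mul_le_mul_of_nonneg_left (hTF _ t) (by positivity)) (hgeo.mul_right (F t))
  have htsumgeo : (∑' k : ℕ, ((2:ℝ)⁻¹) ^ k) = 2 := by
    simpa [one_div] using tsum_geometric_two
  set hre : 𝕋 → ℝ := fun t => ∑' k : ℕ, ((2:ℝ)⁻¹) ^ k * ‖T (n k) t‖ with hhre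
  have hre0 : ∀ t, 0 ≤ hre t := fun t => tsum_nonneg fun k => by positivity
  have hre_le : ∀ t, hre t ≤ 2 * F t := by
    intro t
    calc hre t ≤ ∑' k : ℕ, ((2:ℝ)⁻¹) ^ k * F t :=
          Summable.tsum_le_tsum (fun k => mul_le_mul_of_nonneg_left (hTF _ t) (by positivity))
            (hsumm t) (hgeo.mul_right (F t))
      _ = 2 * F t := by rw [tsum_mul_right, htsumgeo]
  have hSm : ∀ m : ℕ, AEStronglyMeasurable
      (fun t => ∑ k ∈ Finset.range m, ((2:ℝ)⁻¹) ^ k * ‖T (n k) t‖) μ := fun m =>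
    Finset.aestronglyMeasurable_fun_sum _ fun k _ => ((hToc (n k)).1.1.norm.const_mul _)
  have hre_m : AEStronglyMeasurable hre μ := by
    apply aestronglyMeasurable_of_tendsto_ae atTop hSm
    filter_upwards with t
    exact (hsumm t).hasSum.tendsto_sum_nat
  set h : 𝕋 → ℂ := fun t => ((hre t : ℝ) : ℂ) with hh
  have hhm : AEStronglyMeasurable h μ :=
    Complex.continuous_ofReal.comp_aestronglyMeasurable hre_m
  have hhnorm : ∀ t, ‖h t‖ = hre t := by
    intro t
    simp only [hh]
    rw [Complex.norm_real, Real.norm_eq_abs, abs_of_nonneg (hre0 t)]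
  have hmemh : MemN X.N h := by
    refine ⟨hhm, ?_⟩
    have hb : ∀ᵐ t ∂μ, ‖h t‖ ≤ ‖(fun t => (2:ℂ) * f t) t‖ := by
      filter_upwards [hFf] with t ht
      have h1 := hre_le t
      rw [ht] at h1
      rw [hhnorm, norm_mul]
      have h2 : ‖(2:ℂ)‖ = 2 := by norm_num
      rw [h2]
      exact h1
    calc X.N h ≤ X.N (fun t => (2:ℂ) * f t) := X.ideal _ _ hhm hb
      _ = (‖(2:ℂ)‖₊ : ℝ≥0∞) * X.N f := X.smul_eq _ _
      _ < ⊤ := ENNReal.mul_lt_top ENNReal.coe_lt_top hf.2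
  have hoc : OrderContElemN X.N h := by
    apply aux_oc_of_approx X h hmemh
    intro δ hδ
    obtain ⟨K, hK⟩ : ∃ K : ℕ, ((2:ℝ≥0∞)⁻¹) ^ K * (2 * X.N f) ≤ δ := by
      by_cases hC : 2 * X.N f = 0
      · exact ⟨0, by simp [hC]⟩
      · have hCt : 2 * X.N f ≠ ⊤ := (ENNReal.mul_lt_top (by norm_num) hf.2).ne
        have hdiv : δ / (2 * X.N f) ≠ 0 := by
          simp only [ne_eq, ENNReal.div_eq_zero_iff, not_or]
          exact ⟨hδ.ne', hCt⟩
        obtain ⟨K, hK⟩ := ENNReal.exists_inv_two_pow_lt hdiv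
        refine ⟨K, ?_⟩
        calc ((2:ℝ≥0∞)⁻¹) ^ K * (2 * X.N f) ≤ δ / (2 * X.N f) * (2 * X.N f) :=
              mul_le_mul_left hK.le _
          _ = δ := ENNReal.div_mul_cancel hC hCt
    set S : 𝕋 → ℝ := fun t => ∑ k ∈ Finset.range K, ((2:ℝ)⁻¹) ^ k * ‖T (n k) t‖ with hS
    have hS0 : ∀ t, 0 ≤ S t := fun t => Finset.sum_nonneg fun k _ => by positivity
    have hSle : ∀ t, S t ≤ hre t := fun t =>
      Summable.sum_le_tsum (Finset.range K) (fun k _ => by positivity) (hsumm t)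
    refine ⟨fun t => ((S t : ℝ) : ℂ), fun t => ((hre t - S t : ℝ) : ℂ), ?_, ?_, ?_, ?_⟩
    · apply hLinf
      refine memLp_top_of_bound
        (Complex.continuous_ofReal.comp_aestronglyMeasurable (hSm K))
        (∑ k ∈ Finset.range K, ((2:ℝ)⁻¹) ^ k * (n k : ℝ))
        (Eventually.of_forall fun t => ?_)
      rw [Complex.norm_real, Real.norm_eq_abs, abs_of_nonneg (hS0 t)]
      exact Finset.sum_le_sum fun k _ =>
        mul_le_mul_of_nonneg_left (hTn (n k) t) (by positivity)
    · exact Complex.continuous_ofReal.comp_aestronglyMeasurable (hre_m.sub (hSm K))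
    · filter_upwards with t
      rw [hhnorm, Complex.norm_real, Complex.norm_real, Real.norm_eq_abs, Real.norm_eq_abs,
        abs_of_nonneg (hS0 t), abs_of_nonneg (by linarith [hSle t] : (0:ℝ) ≤ hre t - S t)]
      linarith
    · have hwm : AEStronglyMeasurable (fun t => ((hre t - S t : ℝ) : ℂ)) μ :=
        Complex.continuous_ofReal.comp_aestronglyMeasurable (hre_m.sub (hSm K))
      have hwb : ∀ᵐ t ∂μ, ‖((hre t - S t : ℝ) : ℂ)‖ ≤
          ‖(fun t => ((((2:ℝ)⁻¹ ^ K * 2 : ℝ)) : ℂ) * f t) t‖ := by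
        filter_upwards [hFf] with t ht
        have hsummtail : Summable (fun k : ℕ => ((2:ℝ)⁻¹) ^ (k + K) * ‖T (n (k + K)) t‖) :=
          Summable.of_nonneg_of_le (fun k => by positivity)
            (fun k => by
              rw [pow_add]
              calc ((2:ℝ)⁻¹) ^ k * ((2:ℝ)⁻¹) ^ K * ‖T (n (k + K)) t‖
                  ≤ ((2:ℝ)⁻¹) ^ k * ((2:ℝ)⁻¹) ^ K * F t :=
                    mul_le_mul_of_nonneg_left (hTF _ t) (by positivity)
                _ = ((2:ℝ)⁻¹) ^ k * (((2:ℝ)⁻¹) ^ K * F t) := by ring)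
            (hgeo.mul_right (((2:ℝ)⁻¹) ^ K * F t))
        have htail : hre t - S t = ∑' k : ℕ, ((2:ℝ)⁻¹) ^ (k + K) * ‖T (n (k + K)) t‖ := by
          have h5 := Summable.sum_add_tsum_nat_add (f := fun k : ℕ => ((2:ℝ)⁻¹) ^ k * ‖T (n k) t‖)
            K (hsumm t)
          simp only [hS, hhre]
          linarith
        have htb : (∑' k : ℕ, ((2:ℝ)⁻¹) ^ (k + K) * ‖T (n (k + K)) t‖)
            ≤ ((2:ℝ)⁻¹) ^ K * 2 * F t := by
          calc (∑' k : ℕ, ((2:ℝ)⁻¹) ^ (k + K) * ‖T (n (k + K)) t‖)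
              ≤ ∑' k : ℕ, ((2:ℝ)⁻¹) ^ k * (((2:ℝ)⁻¹) ^ K * F t) := by
                refine Summable.tsum_le_tsum (fun k => ?_) hsummtail
                  (hgeo.mul_right (((2:ℝ)⁻¹) ^ K * F t))
                rw [pow_add]
                calc ((2:ℝ)⁻¹) ^ k * ((2:ℝ)⁻¹) ^ K * ‖T (n (k + K)) t‖
                    ≤ ((2:ℝ)⁻¹) ^ k * ((2:ℝ)⁻¹) ^ K * F t :=
                      mul_le_mul_of_nonneg_left (hTF _ t) (by positivity)
                  _ = ((2:ℝ)⁻¹) ^ k * (((2:ℝ)⁻¹) ^ K * F t) := by ring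
            _ = 2 * (((2:ℝ)⁻¹) ^ K * F t) := by rw [tsum_mul_right, htsumgeo]
            _ = ((2:ℝ)⁻¹) ^ K * 2 * F t := by ring
        rw [Complex.norm_real, Real.norm_eq_abs,
          abs_of_nonneg (by linarith [hSle t] : (0:ℝ) ≤ hre t - S t), norm_mul,
          Complex.norm_real, Real.norm_eq_abs, abs_of_nonneg (by positivity : (0:ℝ) ≤ (2:ℝ)⁻¹ ^ K * 2),
          ← ht]
        calc hre t - S t ≤ ((2:ℝ)⁻¹) ^ K * 2 * F t := htail ▸ htb
          _ = ((2:ℝ)⁻¹) ^ K * 2 * F t := rfl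
      calc X.N (fun t => ((hre t - S t : ℝ) : ℂ))
          ≤ X.N (fun t => ((((2:ℝ)⁻¹ ^ K * 2 : ℝ)) : ℂ) * f t) := X.ideal _ _ hwm hwb
        _ = (‖((((2:ℝ)⁻¹ ^ K * 2 : ℝ)) : ℂ)‖₊ : ℝ≥0∞) * X.N f := X.smul_eq _ _
        _ = ((2:ℝ≥0∞)⁻¹) ^ K * (2 * X.N f) := by
            rw [← enorm_eq_nnnorm, ← ofReal_norm, Complex.norm_real, Real.norm_eq_abs,
              abs_of_nonneg (by positivity : (0:ℝ) ≤ (2:ℝ)⁻¹ ^ K * 2),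
              ENNReal.ofReal_mul (by positivity), ENNReal.ofReal_pow (by positivity),
              ENNReal.ofReal_inv_of_pos two_pos, ENNReal.ofReal_ofNat, mul_assoc]
        _ ≤ δ := hK
  have hfin := (H h hoc).2
  have hlow : ∀ k : ℕ, (2:ℝ≥0∞) ^ k ≤ Y.N (fun t => a t * h t) := by
    intro k
    have hb : ∀ᵐ t ∂μ, ‖(fun t => ((((2:ℝ)⁻¹ ^ k : ℝ)) : ℂ) * (a t * T (n k) t)) t‖
        ≤ ‖(fun t => a t * h t) t‖ := by
      filter_upwards with t
      rw [norm_mul, norm_mul, norm_mul, hhnorm, Complex.norm_real, Real.norm_eq_abs,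
        abs_of_nonneg (by positivity : (0:ℝ) ≤ (2:ℝ)⁻¹ ^ k)]
      have hterm : ((2:ℝ)⁻¹) ^ k * ‖T (n k) t‖ ≤ hre t :=
        Summable.le_tsum (hsumm t) k (fun j _ => by positivity)
      calc ((2:ℝ)⁻¹) ^ k * (‖a t‖ * ‖T (n k) t‖)
          = ‖a t‖ * (((2:ℝ)⁻¹) ^ k * ‖T (n k) t‖) := by ring
        _ ≤ ‖a t‖ * hre t := mul_le_mul_of_nonneg_left hterm (norm_nonneg _)
    have haT : AEStronglyMeasurable (fun t => a t * T (n k) t) μ := ha.mul (hToc (n k)).1.1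
    have hcm2 : AEStronglyMeasurable
        (fun t => ((((2:ℝ)⁻¹ ^ k : ℝ)) : ℂ) * (a t * T (n k) t)) μ := haT.const_mul _
    have h2 := Y.ideal (fun t => a t * h t) _ hcm2 hb
    rw [Y.smul_eq] at h2
    have hcc : (‖((((2:ℝ)⁻¹ ^ k : ℝ)) : ℂ)‖₊ : ℝ≥0∞) = ((2:ℝ≥0∞)⁻¹) ^ k := by
      rw [← enorm_eq_nnnorm, ← ofReal_norm, Complex.norm_real, Real.norm_eq_abs,
        abs_of_nonneg (by positivity : (0:ℝ) ≤ (2:ℝ)⁻¹ ^ k),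
        ENNReal.ofReal_pow (by positivity), ENNReal.ofReal_inv_of_pos two_pos,
        ENNReal.ofReal_ofNat]
    rw [hcc] at h2
    have h24 : ((2:ℝ≥0∞)⁻¹) * 4 = 2 := by
      rw [show (4:ℝ≥0∞) = 2 * 2 by norm_num, ← mul_assoc,
        ENNReal.inv_mul_cancel (by norm_num) (by norm_num), one_mul]
    calc (2:ℝ≥0∞) ^ k = (((2:ℝ≥0∞)⁻¹) * 4) ^ k := by rw [h24]
      _ = ((2:ℝ≥0∞)⁻¹) ^ k * 4 ^ k := mul_pow _ _ _
      _ ≤ ((2:ℝ≥0∞)⁻¹) ^ k * Y.N (fun t => a t * T (n k) t) :=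
          mul_le_mul_right (hn k).le _
      _ ≤ Y.N (fun t => a t * h t) := h2
  obtain ⟨m, hm⟩ := ENNReal.exists_nat_gt hfin.ne
  have hm2 : (m:ℝ≥0∞) ≤ 2 ^ m := by
    calc (m:ℝ≥0∞) ≤ ((2^m : ℕ) : ℝ≥0∞) := Nat.cast_le.mpr (Nat.lt_two_pow_self (n := m)).le
      _ = 2 ^ m := by push_cast; ring
  exact absurd (hm.trans_le (hm2.trans (hlow m))) (lt_irrefl _)

end AuxStatement8

/-- If `X ⊂ Y` are Banach function spaces over `𝕋`, `L^∞ ⊂ X_o` (the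
order continuous part of `X`) and `Y` has the Fatou property, then `M(X_o, Y) = M(X, Y)`
with equality of norms. -/
theorem multiplier_order_continuous_part (X Y : BFS)
    (hXY : ∀ f, MemN X.N f → MemN Y.N f)
    (hLinf : ∀ f : 𝕋 → ℂ, MemLp f ⊤ μ → OrderContElemN X.N f)
    (hFatou : FatouN Y.N)
    (a : 𝕋 → ℂ) (ha : AEStronglyMeasurable a μ) :
    ((∀ f, OrderContElemN X.N f → MemN Y.N (fun t => a t * f t)) ↔
      (∀ f, MemN X.N f → MemN Y.N (fun t => a t * f t))) ∧
    (⨆ f : {f : 𝕋 → ℂ // OrderContElemN X.N f ∧ X.N f ≤ 1},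
        Y.N (fun t => a t * f.1 t)) = multN X.N Y.N a := by
  constructor
  · constructor
    · intro H f hf
      exact aux_key_finite X Y hLinf hFatou a ha H f hf
    · intro H f hfoc
      exact H f hfoc.1
  · apply le_antisymm
    · refine iSup_le ?_
      rintro ⟨f, hfoc, hf1⟩
      exact le_iSup_of_le (⟨f, hfoc.1.1, hf1⟩ : unitBall X.N) le_rfl
    · refine iSup_le ?_
      rintro ⟨f, hfm, hf1⟩
      obtain ⟨T, F, hToc, hTF, hTn, hF0, hFf, hmono⟩ := aux_trunc_seq X hLinf f hfm
      have := aux_fatou_mul Y hFatou a ha f hfm T (fun n => (hToc n).1.1) hmono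
      dsimp only
      rw [this]
      refine iSup_le fun k => ?_
      have hTle : X.N (T k) ≤ 1 := by
        refine le_trans (X.ideal f (T k) (hToc k).1.1 ?_) hf1
        filter_upwards [hFf] with t ht
        rw [← ht]
        exact hTF k t
      exact le_iSup_of_le ⟨T k, hToc k, hTle⟩ le_rfl
end
end
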